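/- Let f be continuous on [a,b] and twice differentiable on (a,b) with |f''| ≤ M on (a,b). Define K(t,x) = t - a for t ∈ [a,x) and K(t,x) = t - b for t ∈ [x,b]. Then for every x ∈ [a,b], | f(x) - ((f(b)-f(a))/(b-a)²)·((x-a)²/2 - (x-b)²/2) - (1/(b-a))·∫_a^b f(t) dt | ≤ (M/(b-a)²)·∫_a^b |K(t,x)|·((t-a)²/2 + (t-b)²/2) dt. -/

import Mathlib

open Set MeasureTheory intervalIntegral

lemma bdd_meas_intervalIntegrable {a b : ℝ} (hab : a ≤ b) {g : ℝ → ℝ} {C : ℝ}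
    (hmeas : AEStronglyMeasurable g (volume.restrict (Set.Ioo a b)))
    (hbdd : ∀ t ∈ Set.Ioo a b, |g t| ≤ C) :
    IntervalIntegrable g volume a b := by
  rw [intervalIntegrable_iff_integrableOn_Ioo_of_le hab]
  refine ⟨hmeas, MeasureTheory.HasFiniteIntegral.restrict_of_bounded (C := C)
    measure_Ioo_lt_top ?_⟩
  exact (ae_restrict_iff' measurableSet_Ioo).mpr
    (Filter.Eventually.of_forall fun t ht => by simpa [Real.norm_eq_abs] using hbdd t ht)

lemma integral_sub_sq {u v : ℝ} : ∫ t in u..v, (t - u) = (v - u) ^ 2 / 2 := by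
  rw [intervalIntegral.integral_sub intervalIntegrable_id intervalIntegrable_const,
    integral_id, intervalIntegral.integral_const]
  simp; ring

lemma integral_sub_sq' {u v : ℝ} : ∫ t in u..v, (t - v) = -((u - v) ^ 2 / 2) := by
  rw [intervalIntegral.integral_sub intervalIntegrable_id intervalIntegrable_const,
    integral_id, intervalIntegral.integral_const]
  simp; ring

theorem corDB_real
    (a b : ℝ) (hab : a < b) (f f' f'' : ℝ → ℝ) (M : ℝ)
    (hf : ContinuousOn f (Set.Icc a b))
    (hf' : ∀ t ∈ Set.Ioo a b, HasDerivAt f (f' t) t)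
    (hf'' : ∀ t ∈ Set.Ioo a b, HasDerivAt f' (f'' t) t)
    (hM : ∀ t ∈ Set.Ioo a b, |f'' t| ≤ M)
    (K : ℝ → ℝ → ℝ)
    (hK : ∀ x, ∀ t, K t x = if t < x then t - a else t - b) :
    ∀ x ∈ Set.Icc a b,
      |f x - (f b - f a) / (b - a) ^ 2 * ((x - a) ^ 2 / 2 - (x - b) ^ 2 / 2)
          - (1 / (b - a)) * ∫ t in a..b, f t|
        ≤ M / (b - a) ^ 2
            * ∫ t in a..b, |K t x| * ((t - a) ^ 2 / 2 + (t - b) ^ 2 / 2) := by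
  intro x hx
  obtain ⟨hax, hxb⟩ := hx
  have hba : (0:ℝ) < b - a := sub_pos.mpr hab
  have hmid : (a + b) / 2 ∈ Set.Ioo a b := ⟨by linarith, by linarith⟩
  have hM0 : 0 ≤ M := le_trans (abs_nonneg _) (hM _ hmid)
  -- Lipschitz bound for f'
  have hlip : ∀ s ∈ Set.Ioo a b, ∀ t ∈ Set.Ioo a b, |f' t - f' s| ≤ M * |t - s| := by
    intro s hs t ht
    have := (convex_Ioo a b).norm_image_sub_le_of_norm_hasDerivWithin_le
      (f := f') (f' := f'') (fun u hu => (hf'' u hu).hasDerivWithinAt)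
      (fun u hu => by simpa [Real.norm_eq_abs] using hM u hu) hs ht
    simpa [Real.norm_eq_abs] using this
  have hf'cont : ContinuousOn f' (Set.Ioo a b) := fun t ht =>
    (hf'' t ht).continuousAt.continuousWithinAt
  set C : ℝ := |f' ((a + b) / 2)| + M * (b - a) with hCdef
  have hf'bdd : ∀ t ∈ Set.Ioo a b, |f' t| ≤ C := by
    intro t ht
    have h1 := hlip _ hmid t ht
    have h2 : |t - (a + b) / 2| ≤ b - a := by
      rw [abs_le]; exact ⟨by linarith [ht.1, ht.2], by linarith [ht.1, ht.2]⟩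
    have h3 : M * |t - (a + b) / 2| ≤ M * (b - a) := mul_le_mul_of_nonneg_left h2 hM0
    calc |f' t| = |f' ((a + b) / 2) + (f' t - f' ((a + b) / 2))| := by ring_nf
      _ ≤ |f' ((a + b) / 2)| + |f' t - f' ((a + b) / 2)| := abs_add_le _ _
      _ ≤ C := by rw [hCdef]; linarith
  -- measurability facts
  have hf'meas : AEStronglyMeasurable f' (volume.restrict (Set.Ioo a b)) :=
    hf'cont.aestronglyMeasurable measurableSet_Ioo
  have hKmeas : Measurable fun t => K t x := by
    simp only [hK]
    exact Measurable.ite measurableSet_Iio (by fun_prop) (by fun_prop)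
  have hKbdd : ∀ t ∈ Set.Ioo a b, |K t x| ≤ b - a := by
    intro t ht
    rw [hK]
    split
    · rw [abs_of_nonneg (by linarith [ht.1])]; linarith [ht.2]
    · rw [abs_of_nonpos (by linarith [ht.2])]; linarith [ht.1]
  -- interval integrabilities on [a,b]
  have intf : IntervalIntegrable f volume a b :=
    (hf.mono (by rw [Set.uIcc_of_le hab.le])).intervalIntegrable
  have intf' : IntervalIntegrable f' volume a b :=
    bdd_meas_intervalIntegrable hab.le hf'meas hf'bdd
  have intaf' : IntervalIntegrable (fun t => (t - a) * f' t) volume a b := by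
    refine bdd_meas_intervalIntegrable hab.le
      ((aestronglyMeasurable_id.sub aestronglyMeasurable_const).mul hf'meas)
      (C := (b - a) * C) ?_
    intro t ht
    rw [abs_mul, abs_of_nonneg (by linarith [ht.1] : (0:ℝ) ≤ t - a)]
    exact mul_le_mul (by linarith [ht.2]) (hf'bdd t ht) (abs_nonneg _) (by linarith)
  have intbf' : IntervalIntegrable (fun t => (t - b) * f' t) volume a b := by
    refine bdd_meas_intervalIntegrable hab.le
      ((aestronglyMeasurable_id.sub aestronglyMeasurable_const).mul hf'meas)
      (C := (b - a) * C) ?_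
    intro t ht
    rw [abs_mul, abs_of_nonpos (by linarith [ht.2] : t - b ≤ (0:ℝ))]
    exact mul_le_mul (by linarith [ht.1]) (hf'bdd t ht) (abs_nonneg _) (by linarith)
  have intK : IntervalIntegrable (fun t => K t x) volume a b :=
    bdd_meas_intervalIntegrable hab.le hKmeas.aestronglyMeasurable.restrict hKbdd
  have intKf' : IntervalIntegrable (fun t => K t x * f' t) volume a b := by
    refine bdd_meas_intervalIntegrable hab.le
      (hKmeas.aestronglyMeasurable.restrict.mul hf'meas) (C := (b - a) * C) ?_
    intro t ht
    rw [abs_mul]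
    exact mul_le_mul (hKbdd t ht) (hf'bdd t ht) (abs_nonneg _) (by linarith)
  -- FTC for f'
  have hFTC : ∫ t in a..b, f' t = f b - f a :=
    integral_eq_sub_of_hasDerivAt_of_le hab.le hf hf' intf'
  have hsub1 : Set.uIcc a x ⊆ Set.uIcc a b := by
    rw [Set.uIcc_of_le hax, Set.uIcc_of_le hab.le]
    exact Set.Icc_subset_Icc le_rfl hxb
  have hsub2 : Set.uIcc x b ⊆ Set.uIcc a b := by
    rw [Set.uIcc_of_le hxb, Set.uIcc_of_le hab.le]
    exact Set.Icc_subset_Icc hax le_rfl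
  -- identity A
  have idA : ∫ t in a..x, ((t - a) * f' t) = (x - a) * f x - ∫ t in a..x, f t := by
    have hd : ∀ t ∈ Set.Ioo a x, HasDerivAt (fun t => (t - a) * f t)
        (f t + (t - a) * f' t) t := by
      intro t ht
      have h1 : t ∈ Set.Ioo a b := ⟨ht.1, lt_of_lt_of_le ht.2 hxb⟩
      have := ((hasDerivAt_id t).sub_const a).mul (hf' t h1)
      refine this.congr_deriv ?_; simp only [id_eq]; ring
    have hcont : ContinuousOn (fun t => (t - a) * f t) (Set.Icc a x) :=
      ((continuous_id.sub continuous_const).continuousOn).mul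
        (hf.mono (Set.Icc_subset_Icc le_rfl hxb))
    have hint : IntervalIntegrable (fun t => f t + (t - a) * f' t) volume a x :=
      (intf.add intaf').mono_set hsub1
    have := integral_eq_sub_of_hasDerivAt_of_le hax hcont hd hint
    rw [intervalIntegral.integral_add (intf.mono_set hsub1) (intaf'.mono_set hsub1)] at this
    simp only [sub_self, zero_mul, sub_zero] at this
    linarith
  -- identity B
  have idB : ∫ t in x..b, ((t - b) * f' t) = (b - x) * f x - ∫ t in x..b, f t := by
    have hd : ∀ t ∈ Set.Ioo x b, HasDerivAt (fun t => (t - b) * f t)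
        (f t + (t - b) * f' t) t := by
      intro t ht
      have h1 : t ∈ Set.Ioo a b := ⟨lt_of_le_of_lt hax ht.1, ht.2⟩
      have := ((hasDerivAt_id t).sub_const b).mul (hf' t h1)
      refine this.congr_deriv ?_; simp only [id_eq]; ring
    have hcont : ContinuousOn (fun t => (t - b) * f t) (Set.Icc x b) :=
      ((continuous_id.sub continuous_const).continuousOn).mul
        (hf.mono (Set.Icc_subset_Icc hax le_rfl))
    have hint : IntervalIntegrable (fun t => f t + (t - b) * f' t) volume x b :=
      (intf.add intbf').mono_set hsub2
    have := integral_eq_sub_of_hasDerivAt_of_le hxb hcont hd hint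
    rw [intervalIntegral.integral_add (intf.mono_set hsub2) (intbf'.mono_set hsub2)] at this
    simp only [sub_self, zero_mul, zero_sub] at this
    linarith
  have hne : ∀ᵐ t : ℝ, t ≠ x := by
    simp [ae_iff, not_not, Set.setOf_eq_eq_singleton, measure_singleton]
  -- rewriting the K-integrals on the two pieces
  have hKa : ∀ g : ℝ → ℝ, ∫ t in a..x, K t x * g t = ∫ t in a..x, (t - a) * g t := by
    intro g
    apply intervalIntegral.integral_congr_ae
    filter_upwards [hne] with t htx ht
    rw [Set.uIoc_of_le hax] at ht
    rw [hK, if_pos (lt_of_le_of_ne ht.2 htx)]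
  have hKb : ∀ g : ℝ → ℝ, ∫ t in x..b, K t x * g t = ∫ t in x..b, (t - b) * g t := by
    intro g
    apply intervalIntegral.integral_congr
    intro t ht
    rw [Set.uIcc_of_le hxb] at ht
    simp only [hK, if_neg (not_lt.mpr ht.1)]
  -- Montgomery identity
  have hsplitf : (∫ t in a..x, f t) + ∫ t in x..b, f t = ∫ t in a..b, f t :=
    integral_add_adjacent_intervals (intf.mono_set hsub1) (intf.mono_set hsub2)
  have hJ : ∫ t in a..b, K t x * f' t = (b - a) * f x - ∫ t in a..b, f t := by
    rw [← integral_add_adjacent_intervals (b := x) (intKf'.mono_set hsub1)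
      (intKf'.mono_set hsub2), hKa f', hKb f', idA, idB]
    linarith
  -- ∫ K
  have hKP : ∫ t in a..b, K t x = (x - a) ^ 2 / 2 - (x - b) ^ 2 / 2 := by
    have h1 : ∫ t in a..x, K t x * (fun _ => (1:ℝ)) t
        = ∫ t in a..x, (t - a) * (fun _ => (1:ℝ)) t := hKa _
    have h2 : ∫ t in x..b, K t x * (fun _ => (1:ℝ)) t
        = ∫ t in x..b, (t - b) * (fun _ => (1:ℝ)) t := hKb _
    simp only [mul_one] at h1 h2
    rw [← integral_add_adjacent_intervals (b := x) (intK.mono_set hsub1)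
      (intK.mono_set hsub2), h1, h2, integral_sub_sq, integral_sub_sq']
    ring
  set c : ℝ := (f b - f a) / (b - a) with hc
  -- pointwise bound for |f' t - c|
  have key : ∀ t ∈ Set.Ioo a b,
      |f' t - c| * (b - a) ≤ M * ((t - a) ^ 2 / 2 + (t - b) ^ 2 / 2) := by
    intro t ht
    have h1 : ∫ s in a..b, (f' t - f' s) = (b - a) * f' t - (f b - f a) := by
      rw [intervalIntegral.integral_sub intervalIntegrable_const intf', hFTC,
        intervalIntegral.integral_const]
      simp [smul_eq_mul]
    have habs : ∫ s in a..b, |t - s| = (t - a) ^ 2 / 2 + (t - b) ^ 2 / 2 := by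
      have e1 : ∫ s in a..t, |t - s| = ∫ s in a..t, (t - s) := by
        apply intervalIntegral.integral_congr
        intro s hs
        rw [Set.uIcc_of_le ht.1.le] at hs
        exact abs_of_nonneg (by linarith [hs.2])
      have e2 : ∫ s in t..b, |t - s| = ∫ s in t..b, (s - t) := by
        apply intervalIntegral.integral_congr
        intro s hs
        rw [Set.uIcc_of_le ht.2.le] at hs
        show |t - s| = s - t
        rw [abs_sub_comm]
        exact abs_of_nonneg (by linarith [hs.1])
      have i1 : IntervalIntegrable (fun s => |t - s|) volume a t :=
        ((continuous_const.sub continuous_id).abs.intervalIntegrable _ _)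
      have i2 : IntervalIntegrable (fun s => |t - s|) volume t b :=
        ((continuous_const.sub continuous_id).abs.intervalIntegrable _ _)
      have c1 : ∫ s in a..t, (t - s) = t * (t - a) - (t ^ 2 - a ^ 2) / 2 := by
        rw [intervalIntegral.integral_sub intervalIntegrable_const intervalIntegrable_id,
          integral_id, intervalIntegral.integral_const]
        simp [smul_eq_mul]; ring
      have c2 : ∫ s in t..b, (s - t) = (b ^ 2 - t ^ 2) / 2 - t * (b - t) := by
        rw [intervalIntegral.integral_sub intervalIntegrable_id intervalIntegrable_const,
          integral_id, intervalIntegral.integral_const]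
        simp [smul_eq_mul]; ring
      rw [← integral_add_adjacent_intervals (b := t) i1 i2, e1, e2, c1, c2]
      ring
    have hmono : ∫ s in a..b, |f' t - f' s| ≤ ∫ s in a..b, M * |t - s| := by
      rw [intervalIntegral.integral_of_le hab.le, intervalIntegral.integral_of_le hab.le,
        ← setIntegral_congr_set Ioo_ae_eq_Ioc, ← setIntegral_congr_set Ioo_ae_eq_Ioc]
      refine setIntegral_mono_on
        ((intervalIntegrable_iff_integrableOn_Ioo_of_le hab.le).mp
          (intervalIntegrable_const.sub intf').abs)
        ((intervalIntegrable_iff_integrableOn_Ioo_of_le hab.le).mp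
          ((continuous_const.mul (continuous_const.sub continuous_id).abs).intervalIntegrable _ _))
        measurableSet_Ioo ?_
      intro s hs
      exact hlip s hs t ht
    have hstep : |∫ s in a..b, (f' t - f' s)| ≤ ∫ s in a..b, M * |t - s| :=
      le_trans (intervalIntegral.abs_integral_le_integral_abs hab.le) hmono
    rw [h1] at hstep
    rw [intervalIntegral.integral_const_mul, habs] at hstep
    have hcc : c * (b - a) = f b - f a := by
      rw [hc]; field_simp
    have h2 : (f' t - c) * (b - a) = (b - a) * f' t - (f b - f a) := by
      rw [← hcc]; ring
    calc |f' t - c| * (b - a) = |(f' t - c) * (b - a)| := by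
          rw [abs_mul, abs_of_pos hba]
      _ = |(b - a) * f' t - (f b - f a)| := by rw [h2]
      _ ≤ M * ((t - a) ^ 2 / 2 + (t - b) ^ 2 / 2) := hstep
  -- integrand with c subtracted
  have intKfc : IntervalIntegrable (fun t => K t x * (f' t - c)) volume a b := by
    have : (fun t => K t x * (f' t - c)) = fun t => K t x * f' t - K t x * c := by
      funext t; ring
    rw [this]
    exact intKf'.sub (intK.mul_const c)
  have hlin : ∫ t in a..b, K t x * (f' t - c)
      = ((b - a) * f x - ∫ t in a..b, f t) - c * ((x - a) ^ 2 / 2 - (x - b) ^ 2 / 2) := by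
    have h : (fun t => K t x * (f' t - c)) = fun t => K t x * f' t - K t x * c := by
      funext t; ring
    rw [h, intervalIntegral.integral_sub intKf' (intK.mul_const c),
      intervalIntegral.integral_mul_const, hJ, hKP]
    ring
  -- integrability of the RHS integrand
  have intR : IntervalIntegrable
      (fun t => |K t x| * ((t - a) ^ 2 / 2 + (t - b) ^ 2 / 2)) volume a b := by
    refine bdd_meas_intervalIntegrable hab.le
      (hKmeas.abs.aestronglyMeasurable.restrict.mul
        (((continuous_id.sub continuous_const).pow 2).div_const 2 |>.add
          (((continuous_id.sub continuous_const).pow 2).div_const 2)).aestronglyMeasurable.restrict)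
      (C := (b - a) * (b - a) ^ 2) ?_
    intro t ht
    have hp1 : (t - a) ^ 2 ≤ (b - a) ^ 2 := by nlinarith [ht.1, ht.2]
    have hp2 : (t - b) ^ 2 ≤ (b - a) ^ 2 := by nlinarith [ht.1, ht.2]
    have hp0 : (0:ℝ) ≤ (t - a) ^ 2 / 2 + (t - b) ^ 2 / 2 := by positivity
    rw [abs_mul, abs_abs, abs_of_nonneg hp0]
    exact mul_le_mul (hKbdd t ht) (by linarith) hp0 (by linarith)
  -- the main bound
  have hbound : |∫ t in a..b, K t x * (f' t - c)|
      ≤ (M / (b - a)) * ∫ t in a..b, |K t x| * ((t - a) ^ 2 / 2 + (t - b) ^ 2 / 2) := by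
    have step1 : |∫ t in a..b, K t x * (f' t - c)|
        ≤ ∫ t in a..b, |K t x * (f' t - c)| :=
      intervalIntegral.abs_integral_le_integral_abs hab.le
    have step2 : ∫ t in a..b, |K t x * (f' t - c)|
        ≤ ∫ t in a..b, (M / (b - a)) * (|K t x| * ((t - a) ^ 2 / 2 + (t - b) ^ 2 / 2)) := by
      rw [intervalIntegral.integral_of_le hab.le, intervalIntegral.integral_of_le hab.le,
        ← setIntegral_congr_set Ioo_ae_eq_Ioc, ← setIntegral_congr_set Ioo_ae_eq_Ioc]
      refine setIntegral_mono_on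
        ((intervalIntegrable_iff_integrableOn_Ioo_of_le hab.le).mp intKfc.abs)
        ((intervalIntegrable_iff_integrableOn_Ioo_of_le hab.le).mp
          (intR.const_mul (M / (b - a))))
        measurableSet_Ioo ?_
      intro t ht
      have h1 : |f' t - c| ≤ M * ((t - a) ^ 2 / 2 + (t - b) ^ 2 / 2) / (b - a) := by
        rw [le_div_iff₀ hba]
        exact key t ht
      calc |K t x * (f' t - c)| = |K t x| * |f' t - c| := abs_mul _ _
        _ ≤ |K t x| * (M * ((t - a) ^ 2 / 2 + (t - b) ^ 2 / 2) / (b - a)) :=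
            mul_le_mul_of_nonneg_left h1 (abs_nonneg _)
        _ = M / (b - a) * (|K t x| * ((t - a) ^ 2 / 2 + (t - b) ^ 2 / 2)) := by ring
    rw [intervalIntegral.integral_const_mul] at step2
    exact le_trans step1 step2
  -- final assembly
  have hEq : f x - (f b - f a) / (b - a) ^ 2 * ((x - a) ^ 2 / 2 - (x - b) ^ 2 / 2)
      - (1 / (b - a)) * ∫ t in a..b, f t
      = (1 / (b - a)) * ∫ t in a..b, K t x * (f' t - c) := by
    rw [hlin, hc]
    field_simp
    ring
  rw [hEq, abs_mul, abs_of_nonneg (by positivity : (0:ℝ) ≤ 1 / (b - a))]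
  calc (1 / (b - a)) * |∫ t in a..b, K t x * (f' t - c)|
      ≤ (1 / (b - a)) * ((M / (b - a))
          * ∫ t in a..b, |K t x| * ((t - a) ^ 2 / 2 + (t - b) ^ 2 / 2)) :=
        mul_le_mul_of_nonneg_left hbound (by positivity)
    _ = M / (b - a) ^ 2 * ∫ t in a..b, |K t x| * ((t - a) ^ 2 / 2 + (t - b) ^ 2 / 2) := by
        rw [← mul_assoc]
        congr 1
        rw [pow_two]
        field_simp [hba.ne']
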